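/- arXiv:1105.4458 — 2 statements merged into one kernel-verified Lean document; each statement's English description precedes it below -/
import Mathlib

section
/- Let a, c be nonnegative integers. Then in A one has E1^{(a)} E2^{(a+c)} E1^{(c)} = E2^{(c)} E1^{(a+c)} E2^{(a)}. -/
open Finset

noncomputable section

/-- The field ℚ(q) of rational functions over ℚ. -/
abbrev Qq : Type := RatFunc ℚ

/-- The balanced quantum integer [n] = ∑_{i=0}^{n-1} q^{n-1-2i}, viewed in ℚ(q). -/
noncomputable def qint (n : ℕ) : Qq :=
  ∑ i ∈ Finset.range n, (RatFunc.X : Qq) ^ ((n : ℤ) - 1 - 2 * (i : ℤ))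

/-- The quantum factorial [n]! = [n][n-1]⋯[1], with [0]! = 1. -/
noncomputable def qfact : ℕ → Qq
  | 0 => 1
  | n + 1 => qfact n * qint (n + 1)

/-- The balanced quantum binomial coefficient [m choose k] = [m]!/([k]![m-k]!). -/
noncomputable def qbinom (m k : ℕ) : Qq := qfact m / (qfact k * qfact (m - k))

/-- The divided power E^{(a)} = E^a / [a]!. -/
noncomputable def dp {A : Type*} [Ring A] [Module Qq A] (E : A) (a : ℕ) : A :=
  (qfact a)⁻¹ • E ^ a

namespace QAux
abbrev qX : Qq := RatFunc.X
lemma qX_ne : qX ≠ 0 := RatFunc.X_ne_zero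

/-- split: for t ≤ a, [a] = q^{-t}[a-t] + q^{a-t}[t] -/
lemma qint_split {t a : ℕ} (h : t ≤ a) :
    qint a = qX ^ (-(t:ℤ)) * qint (a - t) + qX ^ ((a:ℤ) - t) * qint t := by
  have hc : ((a - t : ℕ) : ℤ) = (a:ℤ) - t := by omega
  unfold qint
  rw [Finset.mul_sum, Finset.mul_sum]
  rw [Finset.range_eq_Ico, ← Finset.sum_Ico_consecutive _ (Nat.zero_le t) h, add_comm]
  congr 1
  · rw [Finset.sum_Ico_eq_sum_range, Finset.range_eq_Ico]
    apply Finset.sum_congr (by simp)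
    intro i hi
    simp only [Finset.mem_Ico] at hi
    rw [← zpow_add₀ qX_ne]
    congr 1
    omega
  · rw [← Finset.range_eq_Ico]
    apply Finset.sum_congr rfl
    intro i hi
    rw [← zpow_add₀ qX_ne]
    congr 1
    omega

lemma qint_ne_zero {n : ℕ} (h : n ≠ 0) : qint n ≠ 0 := by
  have key : qint n * qX ^ ((n:ℤ) - 1) = ∑ i ∈ Finset.range n, (qX ^ 2) ^ i := by
    unfold qint
    rw [Finset.sum_mul]
    rw [← Finset.sum_range_reflect]
    apply Finset.sum_congr rfl
    intro i hi
    simp only [Finset.mem_range] at hi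
    rw [← zpow_natCast ((qX:Qq) ^ 2), ← zpow_natCast (qX:Qq) 2, ← zpow_mul, ← zpow_add₀ qX_ne]
    congr 1
    omega
  have hgeom : (∑ i ∈ Finset.range n, ((qX:Qq) ^ 2) ^ i) ≠ 0 := by
    intro h0
    have hg := geom_sum_mul ((qX:Qq) ^ 2) n
    rw [h0, zero_mul] at hg
    have hx : ((qX:Qq) ^ 2) ^ n = 1 := by linear_combination -hg
    rw [← pow_mul] at hx
    have hinj := RatFunc.algebraMap_injective ℚ
    have hpoly : (Polynomial.X : Polynomial ℚ) ^ (2*n) = 1 := by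
      apply hinj
      simpa [map_pow, RatFunc.algebraMap_X] using hx
    have := congrArg Polynomial.natDegree hpoly
    simp [Polynomial.natDegree_X_pow] at this
    omega
  intro h0
  rw [h0, zero_mul] at key
  exact hgeom key.symm

lemma qfact_ne_zero (n : ℕ) : qfact n ≠ 0 := by
  induction n with
  | zero => simp [qfact]
  | succ k ih => exact mul_ne_zero ih (qint_ne_zero (Nat.succ_ne_zero k))

lemma qint_two : qint 2 = qX + qX⁻¹ := by
  unfold qint
  rw [Finset.sum_range_succ, Finset.sum_range_one]
  norm_num


end QAux


namespace QAux
lemma qint_one : qint 1 = 1 := by unfold qint; simp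
lemma qfact_succ (n : ℕ) : qfact (n+1) = qfact n * qint (n+1) := rfl
lemma qfact_zero : qfact 0 = 1 := rfl

variable {A : Type*} [Ring A] [Algebra Qq A]

lemma smul_cancel {c : Qq} (hc : c ≠ 0) {x y : A} (h : c • x = c • y) : x = y := by
  have := congrArg (fun v => c⁻¹ • v) h
  simpa [smul_smul, inv_mul_cancel₀ hc] using this

lemma dp_zero (E : A) : dp E 0 = 1 := by simp [dp, qfact_zero]
lemma dp_one (E : A) : dp E 1 = E := by
  simp [dp, qfact_succ, qfact_zero, qint_one]

lemma dp_mul_E (E : A) (a : ℕ) : dp E a * E = qint (a+1) • dp E (a+1) := by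
  rw [dp, dp, smul_mul_assoc, ← pow_succ, smul_smul, qfact_succ, mul_inv]
  congr 1
  have h1 := qfact_ne_zero a
  have h2 := qint_ne_zero (Nat.succ_ne_zero a)
  field_simp

lemma E_mul_dp (E : A) (a : ℕ) : E * dp E a = qint (a+1) • dp E (a+1) := by
  rw [dp, dp, mul_smul_comm, ← pow_succ', smul_smul, qfact_succ, mul_inv]
  congr 1
  have h1 := qfact_ne_zero a
  have h2 := qint_ne_zero (Nat.succ_ne_zero a)
  field_simp

lemma dp_mul_dp (E : A) (m n : ℕ) : dp E m * dp E n = qbinom (m+n) n • dp E (m+n) := by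
  rw [dp, dp, dp, smul_mul_assoc, mul_smul_comm, ← pow_add, smul_smul, smul_smul, qbinom]
  congr 1
  have h1 := qfact_ne_zero m
  have h2 := qfact_ne_zero n
  have h3 := qfact_ne_zero (m+n)
  rw [show m + n - n = m by omega]
  field_simp

end QAux
namespace QAux
variable {A : Type*} [Ring A] [Algebra Qq A] {E1 E2 z : A}

lemma qint_split' {t a : ℕ} (h : t ≤ a) :
    qint a = (qX⁻¹)^t * qint (a - t) + qX ^ (a - t) * qint t := by
  rw [qint_split h, zpow_neg, zpow_natCast, inv_pow,
    show (a:ℤ) - t = ((a - t : ℕ) : ℤ) by omega, zpow_natCast]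

section

lemma E1pow_z (hz1 : E1 * z = qX • (z * E1)) (n : ℕ) : E1 ^ n * z = (qX ^ n : Qq) • (z * E1 ^ n) := by
  induction n with
  | zero => simp
  | succ k ih =>
    rw [pow_succ, mul_assoc, hz1, mul_smul_comm, ← mul_assoc, ih]
    simp only [smul_mul_assoc, smul_smul, mul_assoc, pow_succ]
    ring_nf

lemma z_E2pow (hz2 : z * E2 = qX • (E2 * z)) (n : ℕ) : z * E2 ^ n = (qX ^ n : Qq) • (E2 ^ n * z) := by
  induction n with
  | zero => simp
  | succ k ih =>
    rw [pow_succ', ← mul_assoc, hz2, smul_mul_assoc, mul_assoc, ih]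
    simp only [mul_smul_comm, smul_smul, ← mul_assoc, pow_succ]
    ring_nf

lemma dpE1_z (hz1 : E1 * z = qX • (z * E1)) (n : ℕ) : dp E1 n * z = (qX ^ n : Qq) • (z * dp E1 n) := by
  rw [dp, smul_mul_assoc, E1pow_z hz1, mul_smul_comm, smul_smul, smul_smul, mul_comm]

lemma z_dpE2 (hz2 : z * E2 = qX • (E2 * z)) (n : ℕ) : z * dp E2 n = (qX ^ n : Qq) • (dp E2 n * z) := by
  rw [dp, mul_smul_comm, z_E2pow hz2, smul_mul_assoc, smul_smul, smul_smul, mul_comm]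

/-- (C): E1 * E2^{(b+1)} = q^{-(b+1)} E2^{(b+1)} E1 + E2^{(b)} z -/
lemma commC (hz2 : z * E2 = qX • (E2 * z)) (hz3 : E1 * E2 = z + qX⁻¹ • (E2 * E1)) : ∀ b : ℕ, E1 * dp E2 (b+1)
    = ((qX⁻¹)^(b+1) : Qq) • (dp E2 (b+1) * E1) + dp E2 b * z := by
  intro b
  induction b with
  | zero => rw [dp_one, dp_zero, one_mul, pow_one, hz3, add_comm]
  | succ k ih =>
    apply smul_cancel (qint_ne_zero (Nat.succ_ne_zero (k+1)))
    have key : qint (k+2) = (qX⁻¹)^(k+1) + qX * qint (k+1) := by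
      have h := qint_split' (t := k+1) (a := k+2) (by omega)
      rw [show k+2-(k+1) = 1 from by omega, qint_one, pow_one, mul_one] at h
      exact h
    calc qint (k+1+1) • (E1 * dp E2 (k+1+1))
        = E1 * (qint (k+1+1) • dp E2 (k+1+1)) := (mul_smul_comm _ _ _).symm
      _ = (E1 * dp E2 (k+1)) * E2 := by rw [← dp_mul_E, mul_assoc]
      _ = ((qX⁻¹)^(k+1) : Qq) • (dp E2 (k+1) * (E1 * E2)) + dp E2 k * (z * E2) := by
            rw [ih]; simp only [add_mul, smul_mul_assoc, mul_assoc]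
      _ = ((qX⁻¹)^(k+1) : Qq) • (dp E2 (k+1) * z)
          + ((qX⁻¹)^(k+1) * qX⁻¹ * qint (k+2)) • (dp E2 (k+2) * E1)
          + (qX * qint (k+1)) • (dp E2 (k+1) * z) := by
            rw [hz3, hz2]
            simp only [mul_add, mul_smul_comm, smul_smul, smul_add]
            rw [← mul_assoc (dp E2 (k+1)) E2 E1, dp_mul_E, ← mul_assoc (dp E2 k) E2 z, dp_mul_E]
            simp only [smul_mul_assoc, smul_smul, mul_smul_comm]
      _ = qint (k+1+1) • (((qX⁻¹)^(k+1+1) : Qq) • (dp E2 (k+1+1) * E1) + dp E2 (k+1) * z) := by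
            simp only [show k+1+1 = k+2 from rfl]
            rw [smul_add, smul_smul]
            conv_rhs => rw [show qint (k+2) • (dp E2 (k+1) * z)
              = (qX⁻¹)^(k+1) • (dp E2 (k+1) * z) + (qX * qint (k+1)) • (dp E2 (k+1) * z) from by
                rw [← add_smul, ← key]]
            rw [show (qX⁻¹)^(k+1) * qX⁻¹ * qint (k+2) = qint (k+2) * (qX⁻¹)^(k+2) from by ring]
            abel

/-- (C'): E1^{(m+1)} * E2 = q^{-(m+1)} E2 E1^{(m+1)} + z E1^{(m)} -/
lemma commC' (hz1 : E1 * z = qX • (z * E1)) (hz3 : E1 * E2 = z + qX⁻¹ • (E2 * E1)) : ∀ m : ℕ, dp E1 (m+1) * E2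
    = ((qX⁻¹)^(m+1) : Qq) • (E2 * dp E1 (m+1)) + z * dp E1 m := by
  intro m
  induction m with
  | zero => rw [dp_one, dp_zero, mul_one, pow_one, hz3, add_comm]
  | succ k ih =>
    apply smul_cancel (qint_ne_zero (Nat.succ_ne_zero (k+1)))
    have key : qint (k+2) = (qX⁻¹)^(k+1) + qX * qint (k+1) := by
      have h := qint_split' (t := k+1) (a := k+2) (by omega)
      rw [show k+2-(k+1) = 1 from by omega, qint_one, pow_one, mul_one] at h
      exact h
    calc qint (k+1+1) • (dp E1 (k+1+1) * E2)
        = (qint (k+1+1) • dp E1 (k+1+1)) * E2 := (smul_mul_assoc _ _ _).symm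
      _ = E1 * (dp E1 (k+1) * E2) := by rw [← E_mul_dp, mul_assoc]
      _ = ((qX⁻¹)^(k+1) : Qq) • ((E1 * E2) * dp E1 (k+1)) + (E1 * z) * dp E1 k := by
            rw [ih]; simp only [mul_add, mul_smul_comm, mul_assoc]
      _ = ((qX⁻¹)^(k+1) : Qq) • (z * dp E1 (k+1))
          + ((qX⁻¹)^(k+1) * qX⁻¹ * qint (k+2)) • (E2 * dp E1 (k+2))
          + (qX * qint (k+1)) • (z * dp E1 (k+1)) := by
            rw [hz3, hz1]
            simp only [add_mul, smul_mul_assoc, smul_smul, smul_add]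
            rw [mul_assoc E2 E1 (dp E1 (k+1)), E_mul_dp, mul_assoc z E1 (dp E1 k), E_mul_dp]
            simp only [mul_smul_comm, smul_smul, smul_mul_assoc]
      _ = qint (k+1+1) • (((qX⁻¹)^(k+1+1) : Qq) • (E2 * dp E1 (k+1+1)) + z * dp E1 (k+1)) := by
            simp only [show k+1+1 = k+2 from rfl]
            rw [smul_add, smul_smul]
            conv_rhs => rw [show qint (k+2) • (z * dp E1 (k+1))
              = (qX⁻¹)^(k+1) • (z * dp E1 (k+1)) + (qX * qint (k+1)) • (z * dp E1 (k+1)) from by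
                rw [← add_smul, ← key]]
            rw [show (qX⁻¹)^(k+1) * qX⁻¹ * qint (k+2) = qint (k+2) * (qX⁻¹)^(k+2) from by ring]
            abel

end
end QAux
namespace QAux
variable {A : Type*} [Ring A] [Algebra Qq A] {E1 E2 z : A}

lemma expandR (hz1 : E1 * z = qX • (z * E1)) (hz2 : z * E2 = qX • (E2 * z))
    (hz3 : E1 * E2 = z + qX⁻¹ • (E2 * E1)) :
    ∀ a b : ℕ, a ≤ b → dp E1 a * dp E2 b
      = ∑ t ∈ Finset.range (a+1),
          ((qX⁻¹:Qq) ^ ((a-t)*(b-t))) • (dp E2 (b-t) * dp z t * dp E1 (a-t)) := by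
  intro a
  induction a with
  | zero =>
    intro b _
    rw [Finset.sum_range_one]
    simp [dp_zero]
  | succ a ih =>
    intro b hb
    obtain ⟨w, rfl⟩ : ∃ w, b = a + w + 1 := ⟨b-(a+1), by omega⟩
    apply smul_cancel (show qint (a+1) ≠ 0 from qint_ne_zero (by omega))
    have step1 : qint (a+1) • (dp E1 (a+1) * dp E2 (a+w+1))
        = (qX⁻¹:Qq)^(a+w+1) • ((dp E1 a * dp E2 (a+w+1)) * E1)
          + (dp E1 a * dp E2 (a+w)) * z := by
      rw [← smul_mul_assoc, ← dp_mul_E, mul_assoc, commC hz2 hz3 (a+w),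
        mul_add, mul_smul_comm, ← mul_assoc, ← mul_assoc]
    rw [step1, ih (a+w+1) (by omega), ih (a+w) (by omega)]
    rw [Finset.sum_mul, Finset.sum_mul, Finset.smul_sum, Finset.smul_sum]
    have h1 : ∀ x ∈ Finset.range (a+1),
        (qX⁻¹:Qq) ^ (a + w + 1) •
          ((qX⁻¹:Qq) ^ ((a - x) * (a + w + 1 - x)) • (dp E2 (a + w + 1 - x) * dp z x * dp E1 (a - x)) * E1)
        = ((qX⁻¹:Qq) ^ (a + w + 1) * (qX⁻¹:Qq) ^ ((a - x) * (a + w + 1 - x)) * qint (a - x + 1)) •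
            (dp E2 (a + w + 1 - x) * dp z x * dp E1 (a - x + 1)) := by
      intro x hx
      rw [smul_mul_assoc, mul_assoc, dp_mul_E, mul_smul_comm, smul_smul, smul_smul]
    have h2 : ∀ x ∈ Finset.range (a+1),
        (qX⁻¹:Qq) ^ ((a - x) * (a + w - x)) • (dp E2 (a + w - x) * dp z x * dp E1 (a - x)) * z
        = ((qX⁻¹:Qq) ^ ((a - x) * (a + w - x)) * qX ^ (a - x) * qint (x + 1)) •
            (dp E2 (a + w - x) * dp z (x + 1) * dp E1 (a - x)) := by
      intro x hx
      rw [smul_mul_assoc, mul_assoc, dpE1_z hz1, mul_smul_comm, ← mul_assoc,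
        mul_assoc (dp E2 (a+w-x)) (dp z x) z, dp_mul_E, mul_smul_comm, smul_mul_assoc,
        smul_smul, smul_smul]
    have h3 : ∀ x ∈ Finset.range (a+1+1),
        qint (a+1) • (qX⁻¹:Qq) ^ ((a + 1 - x) * (a + w + 1 - x)) •
            (dp E2 (a + w + 1 - x) * dp z x * dp E1 (a + 1 - x))
        = (qint (a+1) * (qX⁻¹:Qq) ^ ((a + 1 - x) * (a + w + 1 - x))) •
            (dp E2 (a + w + 1 - x) * dp z x * dp E1 (a + 1 - x)) := by
      intro x hx
      rw [smul_smul]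
    rw [Finset.sum_congr rfl h1, Finset.sum_congr rfl h2, Finset.sum_congr rfl h3]
    conv_rhs => rw [Finset.sum_range_succ' _ (a+1)]
    conv_rhs => rw [Finset.sum_range_succ]
    conv_lhs => rw [Finset.sum_range_succ' _ a]
    conv_lhs => rw [Finset.sum_range_succ]
    have hfirst :
        ((qX⁻¹:Qq) ^ (a + w + 1) * (qX⁻¹:Qq) ^ ((a - 0) * (a + w + 1 - 0)) * qint (a - 0 + 1)) •
          (dp E2 (a + w + 1 - 0) * dp z 0 * dp E1 (a - 0 + 1))
        = (qint (a + 1) * (qX⁻¹:Qq) ^ ((a + 1 - 0) * (a + w + 1 - 0))) •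
          (dp E2 (a + w + 1 - 0) * dp z 0 * dp E1 (a + 1 - 0)) := by
      simp only [Nat.sub_zero]
      congr 1
      ring
    have hlast :
        ((qX⁻¹:Qq) ^ ((a - a) * (a + w - a)) * qX ^ (a - a) * qint (a + 1)) •
          (dp E2 (a + w - a) * dp z (a + 1) * dp E1 (a - a))
        = (qint (a + 1) * (qX⁻¹:Qq) ^ ((a + 1 - (a + 1)) * (a + w + 1 - (a + 1)))) •
          (dp E2 (a + w + 1 - (a + 1)) * dp z (a + 1) * dp E1 (a + 1 - (a + 1))) := by
      rw [show a - a = 0 from by omega, show a + w - a = w from by omega,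
        show a + 1 - (a + 1) = 0 from by omega, show a + w + 1 - (a + 1) = w from by omega]
      congr 1
      ring
    have hmid : ∀ x ∈ Finset.range a,
        (qint (a + 1) * (qX⁻¹:Qq) ^ ((a + 1 - (x + 1)) * (a + w + 1 - (x + 1)))) •
          (dp E2 (a + w + 1 - (x + 1)) * dp z (x + 1) * dp E1 (a + 1 - (x + 1)))
        = ((qX⁻¹:Qq) ^ (a + w + 1) * (qX⁻¹:Qq) ^ ((a - (x + 1)) * (a + w + 1 - (x + 1))) * qint (a - (x + 1) + 1)) •
            (dp E2 (a + w + 1 - (x + 1)) * dp z (x + 1) * dp E1 (a - (x + 1) + 1))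
          + ((qX⁻¹:Qq) ^ ((a - x) * (a + w - x)) * qX ^ (a - x) * qint (x + 1)) •
            (dp E2 (a + w - x) * dp z (x + 1) * dp E1 (a - x)) := by
      intro x hx
      simp only [Finset.mem_range] at hx
      obtain ⟨u, rfl⟩ : ∃ u, a = x + 1 + u := ⟨a - (x + 1), by omega⟩
      rw [show x + 1 + u + 1 - (x + 1) = u + 1 from by omega,
        show x + 1 + u + w + 1 - (x + 1) = u + w + 1 from by omega,
        show x + 1 + u - (x + 1) = u from by omega,
        show x + 1 + u - x = u + 1 from by omega,
        show x + 1 + u + w - x = u + w + 1 from by omega]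
      rw [← add_smul]
      congr 1
      have h := qint_split' (t := x + 1) (a := x + 1 + u + 1) (by omega)
      rw [show x + 1 + u + 1 - (x + 1) = u + 1 from by omega] at h
      rw [h]
      ring
    rw [hfirst, hlast]
    conv_rhs => rw [Finset.sum_congr rfl hmid, Finset.sum_add_distrib]
    abel
end QAux
namespace QAux
variable {A : Type*} [Ring A] [Algebra Qq A] {E1 E2 z : A}

open MulOpposite in
lemma expandL (hz1 : E1 * z = qX • (z * E1)) (hz2 : z * E2 = qX • (E2 * z))
    (hz3 : E1 * E2 = z + qX⁻¹ • (E2 * E1)) :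
    ∀ a b : ℕ, b ≤ a → dp E1 a * dp E2 b
      = ∑ t ∈ Finset.range (b+1),
          ((qX⁻¹:Qq) ^ ((a-t)*(b-t))) • (dp E2 (b-t) * dp z t * dp E1 (a-t)) := by
  intro a b hba
  have hdp : ∀ (E : A) (k : ℕ), dp (op E) k = op (dp E k) := by
    intro E k
    rw [dp, dp, MulOpposite.op_smul, MulOpposite.op_pow]
  have h1' : (op E2) * (op z) = qX • ((op z) * (op E2)) := by
    rw [← MulOpposite.op_mul, ← MulOpposite.op_mul, hz2, MulOpposite.op_smul]
  have h2' : (op z) * (op E1) = qX • ((op E1) * (op z)) := by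
    rw [← MulOpposite.op_mul, ← MulOpposite.op_mul, hz1, MulOpposite.op_smul]
  have h3' : (op E2) * (op E1) = (op z) + qX⁻¹ • ((op E1) * (op E2)) := by
    rw [← MulOpposite.op_mul, ← MulOpposite.op_mul, hz3, MulOpposite.op_add,
      MulOpposite.op_smul]
  have key := expandR h1' h2' h3' b a hba
  apply op_injective
  rw [MulOpposite.op_mul, ← hdp, ← hdp, key, Finset.op_sum]
  apply Finset.sum_congr rfl
  intro t ht
  rw [hdp, hdp, hdp, MulOpposite.op_smul, MulOpposite.op_mul, MulOpposite.op_mul, mul_assoc,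
    show (b-t)*(a-t) = (a-t)*(b-t) from Nat.mul_comm _ _]
end QAux
namespace QAux

lemma qbinom_symm (k l : ℕ) : qbinom (k+l) k = qbinom (k+l) l := by
  rw [qbinom, qbinom, Nat.add_sub_cancel_left, Nat.add_sub_cancel, mul_comm]

end QAux


open QAux

/-- E1^{(a)} E2^{(a+c)} E1^{(c)} = E2^{(c)} E1^{(a+c)} E2^{(a)}. -/
theorem stmt_1 (A : Type*) [Ring A] [Algebra Qq A] (E1 E2 : A)
    (hs1 : E1 ^ 2 * E2 + E2 * E1 ^ 2 = qint 2 • (E1 * E2 * E1))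
    (hs2 : E2 ^ 2 * E1 + E1 * E2 ^ 2 = qint 2 • (E2 * E1 * E2))
    (a c : ℕ) :
    dp E1 a * dp E2 (a + c) * dp E1 c = dp E2 c * dp E1 (a + c) * dp E2 a := by
  set z : A := E1 * E2 - (qX⁻¹ : Qq) • (E2 * E1) with hzdef
  have hz3 : E1 * E2 = z + (qX⁻¹:Qq) • (E2 * E1) := by rw [hzdef, sub_add_cancel]
  have hz1 : E1 * z = qX • (z * E1) := by
    rw [hzdef, mul_sub, sub_mul, smul_sub, mul_smul_comm, smul_mul_assoc, smul_smul,
      mul_inv_cancel₀ qX_ne, one_smul]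
    have h := hs1
    rw [qint_two, add_smul] at h
    have h' : E1 * (E1 * E2) + (E2 * E1) * E1 = qX • ((E1*E2)*E1) + (qX⁻¹:Qq) • ((E1*E2)*E1) := by
      calc E1 * (E1 * E2) + (E2 * E1) * E1 = E1 ^ 2 * E2 + E2 * E1 ^ 2 := by
            noncomm_ring
        _ = _ := h
    rw [← mul_assoc E1 E2 E1]
    rw [sub_eq_sub_iff_add_eq_add]
    exact h'
  have hz2 : z * E2 = qX • (E2 * z) := by
    rw [hzdef, sub_mul, mul_sub, smul_sub, smul_mul_assoc, mul_smul_comm, smul_smul,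
      mul_inv_cancel₀ qX_ne, one_smul]
    have h := hs2
    rw [qint_two, add_smul] at h
    have h' : (E1 * E2) * E2 + E2 * (E2 * E1) = qX • (E2*(E1*E2)) + (qX⁻¹:Qq) • ((E2*E1)*E2) := by
      calc (E1 * E2) * E2 + E2 * (E2 * E1) = E2 ^ 2 * E1 + E1 * E2 ^ 2 := by
            noncomm_ring
        _ = qX • ((E2*E1)*E2) + (qX⁻¹:Qq) • ((E2*E1)*E2) := h
        _ = qX • (E2*(E1*E2)) + (qX⁻¹:Qq) • ((E2*E1)*E2) := by rw [mul_assoc]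
    rw [sub_eq_sub_iff_add_eq_add]
    exact h'
  have hL := expandR hz1 hz2 hz3 a (a+c) (by omega)
  have hR := expandL hz1 hz2 hz3 (a+c) a (by omega)
  rw [hL, mul_assoc (dp E2 c), hR, Finset.sum_mul, Finset.mul_sum]
  apply Finset.sum_congr rfl
  intro t ht
  simp only [Finset.mem_range] at ht
  obtain ⟨u, rfl⟩ : ∃ u, a = t + u := ⟨a - t, by omega⟩
  rw [show t+u-t = u from by omega, show t+u+c-t = u+c from by omega]
  rw [smul_mul_assoc, mul_assoc, dp_mul_dp, mul_smul_comm, smul_smul]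
  rw [mul_smul_comm, ← mul_assoc, ← mul_assoc, dp_mul_dp, smul_mul_assoc, smul_mul_assoc,
    smul_smul]
  rw [show c+u = u+c from by omega]
  congr 1
  rw [show qbinom (u+c) u = qbinom (u+c) c from qbinom_symm u c]
  ring
end
end

section
/- Higher quantum Serre relations: let m, n be integers with m > n > 0 and let ε ∈ {+1, −1}. Then in A one has ∑_{r=0}^{m} (−1)^r q^{ε(m−n−1)r} · E1^{(m−r)} E2^{(n)} E1^{(r)} = 0, where q denotes the image of the variable q in ℚ(q). The same identity holds with the roles of E1 and E2 interchanged. -/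
open Finset

noncomputable section

namespace HS

noncomputable def u : Qq := RatFunc.X

lemma u_ne : u ≠ 0 := RatFunc.X_ne_zero

lemma qint_zero : qint 0 = 0 := by simp [qint]

lemma qint_one : qint 1 = 1 := by simp [qint]

lemma qint_ne_zero {n : ℕ} (h : 0 < n) : qint n ≠ 0 := by
  have key : u ^ ((n : ℤ) - 1) * qint n =
      algebraMap (Polynomial ℚ) Qq (∑ i ∈ range n, Polynomial.X ^ (2 * (n - 1 - i))) := by
    simp only [u, qint]
    rw [Finset.mul_sum, map_sum]
    refine Finset.sum_congr rfl fun i hi => ?_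
    rw [Finset.mem_range] at hi
    rw [← zpow_add₀ (RatFunc.X_ne_zero (K := ℚ)), map_pow, RatFunc.algebraMap_X]
    rw [← zpow_natCast (RatFunc.X : Qq) (2 * (n - 1 - i))]
    congr 1
    push_cast [Nat.cast_sub (by omega : i ≤ n - 1), Nat.cast_sub (by omega : 1 ≤ n)]
    ring
  intro hz
  rw [hz, mul_zero] at key
  have hp : (∑ i ∈ range n, (Polynomial.X : Polynomial ℚ) ^ (2 * (n - 1 - i))) ≠ 0 := by
    intro hp0
    have hc : (∑ i ∈ range n, (Polynomial.X : Polynomial ℚ) ^ (2 * (n - 1 - i))).coeff 0 = 1 := by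
      rw [Polynomial.finset_sum_coeff]
      rw [Finset.sum_eq_single (n-1)]
      · simp [Polynomial.coeff_X_pow, Nat.sub_self]
      · intro i hi hne
        rw [Finset.mem_range] at hi
        rw [Polynomial.coeff_X_pow]
        simp only [ite_eq_right_iff]
        intro h2; omega
      · intro h'; simp at h'; omega
    rw [hp0] at hc; simp at hc
  exact RatFunc.algebraMap_ne_zero hp key.symm

lemma qfact_ne_zero (n : ℕ) : qfact n ≠ 0 := by
  induction n with
  | zero => simp [qfact]
  | succ k ih => exact mul_ne_zero ih (qint_ne_zero k.succ_pos)

lemma qint_split1 {r t : ℕ} (h : r ≤ t) :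
    qint t = u ^ (r:ℤ) * qint (t - r) + u ^ ((r:ℤ) - t) * qint r := by
  obtain ⟨s, rfl⟩ : ∃ s, t = s + r := ⟨t - r, by omega⟩
  simp only [u, qint, Nat.add_sub_cancel, Finset.mul_sum]
  rw [Finset.sum_range_add]
  congr 1
  · refine Finset.sum_congr rfl fun i hi => ?_
    rw [← zpow_add₀ (RatFunc.X_ne_zero (K := ℚ))]
    congr 1
    push_cast
    ring
  · refine Finset.sum_congr rfl fun i hi => ?_
    rw [← zpow_add₀ (RatFunc.X_ne_zero (K := ℚ))]
    congr 1
    push_cast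
    ring

lemma qint_split2 {r t : ℕ} (h : r ≤ t) :
    qint t = u ^ (-(r:ℤ)) * qint (t - r) + u ^ ((t:ℤ) - r) * qint r := by
  obtain ⟨s, rfl⟩ : ∃ s, t = r + s := ⟨t - r, by omega⟩
  simp only [u, qint, Nat.add_sub_cancel_left, Finset.mul_sum]
  rw [Finset.sum_range_add, add_comm]
  congr 1
  · refine Finset.sum_congr rfl fun i hi => ?_
    rw [← zpow_add₀ (RatFunc.X_ne_zero (K := ℚ))]
    congr 1
    push_cast
    ring
  · refine Finset.sum_congr rfl fun i hi => ?_
    rw [← zpow_add₀ (RatFunc.X_ne_zero (K := ℚ))]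
    congr 1
    push_cast
    ring


/-- Balanced q-binomial, defined via Pascal recursion so that it vanishes for r > t. -/
noncomputable def qb : ℕ → ℕ → Qq
  | 0, 0 => 1
  | 0, _ + 1 => 0
  | _ + 1, 0 => 1
  | t + 1, r + 1 => u ^ ((r : ℤ) + 1) * qb t (r + 1) + u ^ ((r : ℤ) - t) * qb t r

lemma qb_zero_left (t : ℕ) : qb t 0 = 1 := by cases t <;> rfl

lemma qb_succ (t r : ℕ) : qb (t+1) (r+1) =
    u ^ ((r : ℤ) + 1) * qb t (r + 1) + u ^ ((r : ℤ) - t) * qb t r := rfl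

lemma qb_gt : ∀ {t r : ℕ}, t < r → qb t r = 0 := by
  intro t
  induction t with
  | zero => intro r h; match r, h with | r + 1, _ => rfl
  | succ s ih =>
    intro r h
    match r, h with
    | r + 1, h =>
      rw [qb_succ, ih (by omega), ih (by omega)]
      ring

lemma qb_self : ∀ t : ℕ, qb t t = 1 := by
  intro t
  induction t with
  | zero => rfl
  | succ s ih =>
    rw [qb_succ, qb_gt (by omega), ih, sub_self, zpow_zero]
    ring

lemma qfact_succ (n : ℕ) : qfact (n + 1) = qfact n * qint (n + 1) := rfl

lemma qfact_qb : ∀ {t r : ℕ}, r ≤ t → qfact r * qfact (t - r) * qb t r = qfact t := by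
  intro t
  induction t with
  | zero => intro r h; interval_cases r; simp [qb, qfact]
  | succ s ih =>
    intro r h
    match r with
    | 0 => simp [qb_zero_left, qfact]
    | r + 1 =>
      rw [qb_succ, show s + 1 - (r+1) = s - r by omega]
      rcases Nat.lt_or_ge r s with hr | hr
      · have h1 : qfact (r+1) * qfact (s - (r+1)) * qb s (r+1) = qfact s := ih (by omega)
        have h2 : qfact r * qfact (s - r) * qb s r = qfact s := ih (by omega)
        have e1 : qfact (s - r) = qfact (s - (r+1)) * qint (s - r) := by
          rw [show s - r = (s - (r+1)) + 1 by omega, qfact_succ, show s - (r+1) + 1 = s - r by omega]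
        have e2 : qfact (r + 1) = qfact r * qint (r+1) := qfact_succ r
        have split : qint (s+1) = u ^ ((r:ℤ)+1) * qint (s - r) + u ^ ((r:ℤ) - s) * qint (r+1) := by
          have hq := qint_split1 (r := r+1) (t := s+1) (by omega)
          rw [show s + 1 - (r+1) = s - r by omega] at hq
          rw [hq]
          congr 2 <;> push_cast <;> ring
        have qs : qfact (s+1) = qfact s * qint (s+1) := qfact_succ s
        linear_combination (u ^ ((r:ℤ)+1) * qfact (r+1) * qb s (r+1)) * e1
          + (u ^ ((r:ℤ)+1) * qint (s-r)) * h1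
          + (u ^ ((r:ℤ) - s) * qb s r * qfact (s-r)) * e2
          + (u ^ ((r:ℤ) - s) * qint (r+1)) * h2
          + (- qfact s) * split + (-1 : Qq) * qs
      · have hrs : r = s := by omega
        subst hrs
        rw [qb_gt (by omega), qb_self, sub_self, zpow_zero]
        simp [qfact]

lemma qb_eq {t r : ℕ} (h : r ≤ t) : qb t r = qfact t / (qfact r * qfact (t - r)) := by
  rw [← qfact_qb h]
  field_simp [qfact_ne_zero]

lemma qb_pascal2 (a k : ℕ) :
    qb (a+1) (k+1) = u ^ (-(k:ℤ)-1) * qb a (k+1) + u ^ ((a:ℤ)-k) * qb a k := by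
  rcases Nat.lt_or_ge a k with h | h
  · rw [qb_gt (by omega), qb_gt (by omega), qb_gt (by omega)]; ring
  rcases Nat.eq_or_lt_of_le h with rfl | h2
  · rw [qb_self, qb_gt (by omega), qb_self, sub_self, zpow_zero]; ring
  · -- k + 1 ≤ a
    have hka : k + 1 ≤ a := h2
    have split : qint (a+1) = u ^ (-(k:ℤ)-1) * qint (a - k) + u ^ ((a:ℤ) - k) * qint (k+1) := by
      have hq := qint_split2 (r := k+1) (t := a+1) (by omega)
      rw [show a + 1 - (k+1) = a - k by omega] at hq
      rw [hq]
      congr 2 <;> push_cast <;> ring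
    rw [qb_eq (by omega), qb_eq (by omega), qb_eq (by omega)]
    rw [show a + 1 - (k+1) = a - k by omega, show a - (k+1) = a - k - 1 by omega]
    have e1 : qfact (a - k) = qfact (a - k - 1) * qint (a - k) := by
      rw [show a - k = (a - k - 1) + 1 by omega, qfact_succ, show a - k - 1 + 1 = a - k by omega]
    have e2 : qfact (k + 1) = qfact k * qint (k+1) := qfact_succ k
    have e3 : qfact (a+1) = qfact a * qint (a+1) := qfact_succ a
    rw [e3, split, e1, e2]
    have h1 := qfact_ne_zero k
    have h2 := qfact_ne_zero (a - k - 1)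
    have h3 := qint_ne_zero (n := a - k) (by omega)
    have h4 := qint_ne_zero (n := k + 1) (by omega)
    have h5 : u ≠ 0 := u_ne
    field_simp

noncomputable def P (t : ℕ) (c : ℤ) : Qq :=
  ∑ r ∈ range (t+1), (-1 : Qq)^r * u ^ (c * r) * qb t r

lemma P_rec (t : ℕ) (c : ℤ) : P (t+1) c = (1 - u ^ (c - t)) * P t (c+1) := by
  have hsplit : ∀ r ∈ range (t+1),
      (-1:Qq)^(r+1) * u ^ (c * ((r+1:ℕ):ℤ)) * qb (t+1) (r+1)
      = (-1:Qq)^(r+1) * u ^ ((c+1) * ((r+1:ℕ):ℤ)) * qb t (r+1)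
        + (- u ^ (c - t)) * ((-1:Qq)^r * u ^ ((c+1) * r) * qb t r) := by
    intro r _
    rw [qb_succ]
    have e1 : u ^ (c * ((r+1:ℕ):ℤ)) * u ^ ((r:ℤ)+1) = u ^ ((c+1) * ((r+1:ℕ):ℤ)) := by
      rw [← zpow_add₀ u_ne]; congr 1; push_cast; ring
    have e2 : u ^ (c * ((r+1:ℕ):ℤ)) * u ^ ((r:ℤ)-t) = u ^ (c - t) * u ^ ((c+1) * (r:ℤ)) := by
      rw [← zpow_add₀ u_ne, ← zpow_add₀ u_ne]; congr 1; push_cast; ring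
    linear_combination ((-1:Qq)^(r+1) * qb t (r+1)) * e1 + ((-1:Qq)^(r+1) * qb t r) * e2
  rw [P, Finset.sum_range_succ']
  rw [Finset.sum_congr rfl hsplit, Finset.sum_add_distrib, ← Finset.mul_sum]
  have h1 : (∑ r ∈ range (t+1), (-1:Qq)^(r+1) * u ^ ((c+1) * ((r+1:ℕ):ℤ)) * qb t (r+1))
      = P t (c+1) - 1 := by
    have : P t (c+1) = (∑ r ∈ range t, (-1:Qq)^(r+1) * u ^ ((c+1) * ((r+1:ℕ):ℤ)) * qb t (r+1)) + 1 := by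
      rw [P, Finset.sum_range_succ']
      simp [qb_zero_left]
    rw [this, Finset.sum_range_succ, qb_gt (Nat.lt_succ_self t)]
    ring
  rw [h1]
  have h2 : (∑ r ∈ range (t+1), (-1:Qq)^r * u ^ ((c+1) * (r:ℤ)) * qb t r) = P t (c+1) := rfl
  rw [h2]
  simp [qb_zero_left]
  ring

lemma P_vanish : ∀ (t : ℕ) (c : ℤ), 1 ≤ t → -((t:ℤ)-1) ≤ c → c ≤ (t:ℤ)-1 →
    Odd (c + t) → P t c = 0 := by
  intro t
  induction t with
  | zero => omega
  | succ s ih =>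
    intro c _ hlo hhi hodd
    rw [P_rec]
    rcases eq_or_lt_of_le hhi with he | hlt
    · rw [show c - s = 0 by push_cast at he ⊢; omega]
      simp
    · have hs1 : 1 ≤ s := by
        by_contra hs
        have : s = 0 := by omega
        subst this
        push_cast at hlo hlt
        omega
      obtain ⟨j, hj⟩ := hodd
      push_cast at hlo hhi hlt hj
      rw [ih (c+1) hs1 (by omega) (by omega) ⟨j, by push_cast; omega⟩]
      ring

noncomputable def C : ℕ → ℕ → ℕ → Qq
  | 0, _, 0 => 1
  | 0, _, _ + 1 => 0
  | a + 1, n, 0 => u ^ (n:ℤ) * C a n 0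
  | a + 1, n, k + 1 => u ^ ((n:ℤ) - 2*((k:ℤ)+1)) * C a n (k+1) + qint (n - k) * C a n k

lemma C_succ (a n k : ℕ) : C (a+1) n (k+1)
    = u ^ ((n:ℤ) - 2*((k:ℤ)+1)) * C a n (k+1) + qint (n - k) * C a n k := rfl

lemma C_succ_zero (a n : ℕ) : C (a+1) n 0 = u ^ (n:ℤ) * C a n 0 := rfl

lemma C_gt : ∀ {a : ℕ} (n : ℕ) {k : ℕ}, a < k → C a n k = 0 := by
  intro a
  induction a with
  | zero => intro n k h; match k, h with | k + 1, _ => rfl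
  | succ s ih =>
    intro n k h
    match k, h with
    | k + 1, h =>
      rw [C_succ, ih n (by omega), ih n (by omega)]
      ring

lemma C_closed : ∀ (a : ℕ) {n k : ℕ}, k ≤ n →
    qfact (n - k) * C a n k = u ^ (((n:ℤ)-k)*((a:ℤ)-k)) * qb a k * qfact n := by
  intro a
  induction a with
  | zero =>
    intro n k hk
    match k with
    | 0 => simp [C, qb_zero_left]
    | k + 1 => simp [C, qb_gt (Nat.succ_pos k)]
  | succ s ih =>
    intro n k hk
    match k with
    | 0 =>
      rw [C_succ_zero, qb_zero_left]
      have := ih (n := n) (k := 0) (by omega)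
      rw [qb_zero_left] at this
      simp only [Nat.sub_zero] at this ⊢
      have e : u ^ ((n:ℤ)) * u ^ (((n:ℤ)-((0:ℕ):ℤ))*((s:ℤ)-((0:ℕ):ℤ)))
          = u ^ (((n:ℤ)-((0:ℕ):ℤ))*(((s+1:ℕ):ℤ)-((0:ℕ):ℤ))) := by
        rw [← zpow_add₀ u_ne]; congr 1; push_cast; ring
      linear_combination (u ^ ((n:ℤ))) * this + (qfact n) * e
    | k + 1 =>
      have hkn : k + 1 ≤ n := hk
      rw [C_succ]
      have merge : qfact (n - (k+1)) * qint (n - k) = qfact (n - k) := by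
        rw [show n - k = (n - (k+1)) + 1 by omega, qfact_succ, show n - (k+1) + 1 = n - k by omega]
      have ih1 := ih (n := n) (k := k+1) hkn
      have ih0 := ih (n := n) (k := k) (by omega)
      have pas := qb_pascal2 s k
      -- target
      rw [qb_pascal2]
      have e1 : u ^ (((n:ℤ)-(k+1))*((s:ℤ)+1-(k+1))) * (u ^ (-(k:ℤ)-1)) 
          = u ^ ((n:ℤ) - 2*((k:ℤ)+1)) * u ^ (((n:ℤ)-((k:ℤ)+1))*((s:ℤ)-((k:ℤ)+1))) := by
        rw [← zpow_add₀ u_ne, ← zpow_add₀ u_ne]; congr 1; ring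
      have e2 : u ^ (((n:ℤ)-(k+1))*((s:ℤ)+1-(k+1))) * (u ^ ((s:ℤ)-k))
          = u ^ (((n:ℤ)-(k:ℤ))*((s:ℤ)-(k:ℤ))) := by
        rw [← zpow_add₀ u_ne]; congr 1; ring
      -- goal: qfact (n-(k+1)) * (A * C s n (k+1) + qint (n-k) * C s n k)
      --     = u^{(n-k-1)(s-k)} * (u^{-k-1} qb s (k+1) + u^{s-k} qb s k) * qfact n
      have c1 : ((k+1:ℕ):ℤ) = (k:ℤ)+1 := by push_cast; ring
      have c2 : ((s+1:ℕ):ℤ) = (s:ℤ)+1 := by push_cast; ring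
      rw [c1] at ih1 ⊢
      rw [c2]
      linear_combination (u ^ ((n:ℤ) - 2*((k:ℤ)+1))) * ih1 + (C s n k) * merge + ih0
        + (-(qb s (k+1)) * qfact n) * e1 + (-(qb s k) * qfact n) * e2

lemma key_scalar (m n k : ℕ) (e : ℤ) (hk : k ≤ n) (hm : n < m) (he : e = 1 ∨ e = -1) :
    ∑ r ∈ range (m+1), ((-1:Qq)^r * u ^ (e * ((m:ℤ)-(n:ℤ)-1) * (r:ℤ))
      * ((qfact (m-r) * qfact n * qfact r)⁻¹ * C (m-r) n k)) = 0 := by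
  have hkm : k < m := lt_of_le_of_lt hk hm
  set t : ℕ := m - k with htdef
  set c : ℤ := e * ((m:ℤ)-(n:ℤ)-1) - ((n:ℤ) - k) with hcdef
  have hsub : range (t+1) ⊆ range (m+1) := by
    apply Finset.range_subset_range.mpr; omega
  rw [← Finset.sum_subset hsub (by
    intro r hr hnr
    simp only [Finset.mem_range] at hr hnr
    rw [C_gt n (by omega)]
    ring)]
  have hterm : ∀ r ∈ range (t+1),
      ((-1:Qq)^r * u ^ (e * ((m:ℤ)-(n:ℤ)-1) * (r:ℤ))
        * ((qfact (m-r) * qfact n * qfact r)⁻¹ * C (m-r) n k))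
      = (u ^ (((n:ℤ)-(k:ℤ))*(t:ℤ)) * (qfact (n-k) * qfact k * qfact t)⁻¹)
          * ((-1:Qq)^r * u ^ (c * (r:ℤ)) * qb t r) := by
    intro r hr
    rw [Finset.mem_range] at hr
    have hrt : r ≤ t := by omega
    have hkmr : k ≤ m - r := by omega
    have htr : m - r - k = t - r := by omega
    have hC := C_closed (m - r) (n := n) (k := k) hk
    have hqb1 := qfact_qb (t := m - r) (r := k) hkmr
    have hqb2 := qfact_qb (t := t) (r := r) hrt
    rw [htr] at hqb1
    have ezz : u ^ (e * ((m:ℤ)-(n:ℤ)-1) * (r:ℤ)) * u ^ (((n:ℤ)-(k:ℤ))*(((m-r:ℕ):ℤ)-(k:ℤ)))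
        = u ^ (((n:ℤ)-(k:ℤ))*(t:ℤ)) * u ^ (c * (r:ℤ)) := by
      rw [← zpow_add₀ u_ne, ← zpow_add₀ u_ne]
      congr 1
      rw [hcdef, htdef]
      push_cast [Nat.cast_sub (by omega : r ≤ m), Nat.cast_sub (by omega : k ≤ m)]
      ring
    have hC' : C (m - r) n k
        = (qfact (n-k))⁻¹ * (u ^ (((n:ℤ)-(k:ℤ))*(((m-r:ℕ):ℤ)-(k:ℤ))) * qb (m-r) k * qfact n) := by
      rw [← hC]
      rw [inv_mul_cancel_left₀ (qfact_ne_zero _)]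
    rw [hC']
    have h1 := qfact_ne_zero (m - r)
    have h2 := qfact_ne_zero n
    have h3 := qfact_ne_zero r
    have h4 := qfact_ne_zero (n - k)
    have h5 := qfact_ne_zero k
    have h6 := qfact_ne_zero (t - r)
    have h7 := qfact_ne_zero t
    have hqb1' : qb (m - r) k = qfact (m-r) * (qfact k * qfact (t-r))⁻¹ := by
      rw [← hqb1, mul_comm (qfact k * qfact (t-r)) (qb (m-r) k),
        mul_inv_cancel_right₀ (mul_ne_zero h5 h6)]
    have hqb2' : qb t r = qfact t * (qfact r * qfact (t-r))⁻¹ := by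
      rw [← hqb2, mul_comm (qfact r * qfact (t-r)) (qb t r),
        mul_inv_cancel_right₀ (mul_ne_zero h3 h6)]
    rw [hqb1', hqb2']
    field_simp
    linear_combination ezz
  rw [Finset.sum_congr rfl hterm, ← Finset.mul_sum]
  have hP : (∑ r ∈ range (t+1), (-1:Qq)^r * u ^ (c * (r:ℤ)) * qb t r) = P t c := rfl
  rw [hP]
  have ht1 : 1 ≤ t := by omega
  rw [P_vanish t c ht1 ?lo ?hi ?odd, mul_zero]
  case lo => rcases he with rfl | rfl <;> (push_cast; omega)
  case hi => rcases he with rfl | rfl <;> (push_cast; omega)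
  case odd =>
    rcases he with rfl | rfl
    · exact ⟨(m:ℤ)-(n:ℤ)-1, by rw [hcdef, htdef]; push_cast [Nat.cast_sub (by omega : k ≤ m)]; ring⟩
    · exact ⟨0, by rw [hcdef, htdef]; push_cast [Nat.cast_sub (by omega : k ≤ m)]; ring⟩

lemma qint_two : qint 2 = u + u⁻¹ := by
  rw [qint, Finset.sum_range_succ, Finset.sum_range_one]
  norm_num
  rfl

lemma qint_succ' (s : ℕ) : qint (s+2) = u^(s+1) + u⁻¹ * qint (s+1) := by
  have h := qint_split1 (r := s+1) (t := s+2) (by omega)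
  rw [show (s+2) - (s+1) = 1 by omega, qint_one, mul_one] at h
  rw [h, zpow_natCast, show ((s+1:ℕ):ℤ) - ((s+2:ℕ):ℤ) = -1 by push_cast; ring, zpow_neg_one]

section Alg

variable {A : Type*} [Ring A] [Algebra Qq A] (E1 E2 Y : A)
  (hY : E1 * E2 = Y + u • (E2 * E1))
  (hYE1 : Y * E1 = u • (E1 * Y))
  (hE2Y : E2 * Y = u • (Y * E2))

lemma comm_tail {x y y' x' : A} {c : Qq} (h : x * y = c • (y' * x')) (z : A) :
    x * (y * z) = c • (y' * (x' * z)) := by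
  rw [← mul_assoc, h, smul_mul_assoc, mul_assoc]

include hYE1 in
lemma Ypow_E1 (k : ℕ) : Y^k * E1 = (u^k) • (E1 * Y^k) := by
  induction k with
  | zero => simp
  | succ j ih =>
    rw [pow_succ, mul_assoc, hYE1, mul_smul_comm, ← mul_assoc, ih, smul_mul_assoc,
      smul_smul, mul_assoc, ← pow_succ']

include hYE1 in
lemma E1_Ypow (k : ℕ) : E1 * Y^k = (u^k)⁻¹ • (Y^k * E1) := by
  rw [Ypow_E1 E1 Y hYE1, inv_smul_smul₀ (pow_ne_zero _ u_ne)]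

include hE2Y in
lemma E2pow_Y (j : ℕ) : E2^j * Y = (u^j) • (Y * E2^j) := by
  induction j with
  | zero => simp
  | succ i ih =>
    rw [pow_succ, mul_assoc, hE2Y, mul_smul_comm, ← mul_assoc, ih, smul_mul_assoc,
      smul_smul, mul_assoc, ← pow_succ']

include hE2Y in
lemma Y_E2pow (j : ℕ) : Y * E2^j = (u^j)⁻¹ • (E2^j * Y) := by
  rw [E2pow_Y E2 Y hE2Y, inv_smul_smul₀ (pow_ne_zero _ u_ne)]

include hY hE2Y in
lemma L1 (s : ℕ) : E1 * E2^(s+1) = (u^(s+1)) • (E2^(s+1) * E1) + qint (s+1) • (E2^s * Y) := by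
  induction s with
  | zero =>
    rw [pow_one, pow_one, pow_zero, one_mul, qint_one, one_smul, hY, add_comm]
  | succ j ih =>
    rw [pow_succ, ← mul_assoc, ih, add_mul, smul_mul_assoc, smul_mul_assoc,
      mul_assoc, mul_assoc, hY]
    have hYE2 : Y * E2 = u⁻¹ • (E2 * Y) := by
      rw [hE2Y, inv_smul_smul₀ u_ne]
    rw [hYE2, qint_succ' j]
    rw [mul_add]
    -- now massage
    have e1 : E2^(j+1) * (u • (E2 * E1)) = u • (E2^(j+2) * E1) := by
      rw [mul_smul_comm, ← mul_assoc, ← pow_succ]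
    have e2 : E2^j * (u⁻¹ • (E2 * Y)) = u⁻¹ • (E2^(j+1) * Y) := by
      rw [mul_smul_comm, ← mul_assoc, ← pow_succ]
    rw [e1, e2, ← pow_succ E2 (j+1), smul_add, smul_smul, smul_smul, add_smul,
      mul_comm (qint (j+1)) u⁻¹, ← pow_succ u (j+1)]
    abel

include hY hE2Y in
lemma L1' (s : ℕ) : E1 * E2^s = (u^s) • (E2^s * E1) + qint s • (E2^(s-1) * Y) := by
  match s with
  | 0 => simp [qint_zero]
  | s + 1 => exact L1 E1 E2 Y hY hE2Y s

lemma comm_tail2 {x y y1 x1 y2 x2 : A} {c1 c2 : Qq}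
    (h : x * y = c1 • (y1 * x1) + c2 • (y2 * x2)) (z : A) :
    x * (y * z) = c1 • (y1 * (x1 * z)) + c2 • (y2 * (x2 * z)) := by
  rw [← mul_assoc, h, add_mul, smul_mul_assoc, smul_mul_assoc, mul_assoc, mul_assoc]

lemma upow_conv {n j : ℕ} (h : j ≤ n) : u ^ ((n:ℤ) - 2*(j:ℤ)) = u^(n-j) * (u^j)⁻¹ := by
  rw [← zpow_natCast u (n-j), ← zpow_natCast u j, ← zpow_neg, ← zpow_add₀ u_ne]
  congr 1
  push_cast [Nat.cast_sub h]
  ring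

lemma C_coeff (a n k : ℕ) (h : k + 1 ≤ n) :
    C (a+1) n (k+1) = C a n (k+1) * (u^(n-(k+1)) * (u^(k+1))⁻¹) + C a n k * qint (n-k) := by
  rw [C_succ, show (n:ℤ) - 2*((k:ℤ)+1) = (n:ℤ) - 2*(((k+1:ℕ)):ℤ) by push_cast; ring,
    upow_conv h]
  ring

lemma C_coeff0 (a n : ℕ) : C (a+1) n 0 = C a n 0 * (u^(n-0) * (u^0)⁻¹) := by
  rw [C_succ_zero, pow_zero, inv_one, mul_one, Nat.sub_zero, ← zpow_natCast u n]
  ring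

include hY hYE1 hE2Y in
lemma L2 (n : ℕ) : ∀ a : ℕ,
    E1^a * E2^n = ∑ k ∈ range (n+1), C a n k • (E2^(n-k) * (Y^k * E1^(a-k))) := by
  intro a
  induction a with
  | zero =>
    rw [Finset.sum_eq_single 0]
    · simp [C]
    · intro k _ hk
      match k, hk with
      | k + 1, _ => rw [show C 0 n (k+1) = 0 from rfl, zero_smul]
    · intro h; simp at h
  | succ a ih =>
    have hterm : ∀ k, k ≤ n →
        E1 * (E2^(n-k) * (Y^k * E1^(a-k)))
        = (u^(n-k) * (u^k)⁻¹) • (E2^(n-k) * (Y^k * E1^(a-k+1)))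
          + qint (n-k) • (E2^(n-(k+1)) * (Y^(k+1) * E1^(a-k))) := by
      intro k hk
      rw [comm_tail2 (L1' E1 E2 Y hY hE2Y (n-k)) (Y^k * E1^(a-k))]
      rw [comm_tail (E1_Ypow E1 Y hYE1 k) (E1^(a-k))]
      rw [← pow_succ' E1 (a-k)]
      rw [mul_smul_comm, smul_smul]
      rw [show Y * (Y^k * E1^(a-k)) = Y^(k+1) * E1^(a-k) by rw [← mul_assoc, ← pow_succ']]
      rw [Nat.sub_sub]
    have expand : ∀ k ∈ range (n+1),
        C a n k • (E1 * (E2^(n-k) * (Y^k * E1^(a-k))))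
        = (C a n k * (u^(n-k) * (u^k)⁻¹)) • (E2^(n-k) * (Y^k * E1^(a+1-k)))
          + (C a n k * qint (n-k)) • (E2^(n-(k+1)) * (Y^(k+1) * E1^(a+1-(k+1)))) := by
      intro k hk
      rw [Finset.mem_range] at hk
      rw [hterm k (by omega), smul_add, smul_smul, smul_smul, Nat.succ_sub_succ]
      by_cases hka : k ≤ a
      · rw [show a - k + 1 = a + 1 - k by omega]
      · rw [C_gt n (by omega)]
        simp
    calc E1^(a+1) * E2^n = E1 * (E1^a * E2^n) := by rw [pow_succ', mul_assoc]
      _ = ∑ k ∈ range (n+1), C a n k • (E1 * (E2^(n-k) * (Y^k * E1^(a-k)))) := by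
          rw [ih, Finset.mul_sum]
          exact Finset.sum_congr rfl fun k _ => (mul_smul_comm _ _ _)
      _ = ∑ k ∈ range (n+1),
            ((C a n k * (u^(n-k) * (u^k)⁻¹)) • (E2^(n-k) * (Y^k * E1^(a+1-k)))
            + (C a n k * qint (n-k)) • (E2^(n-(k+1)) * (Y^(k+1) * E1^(a+1-(k+1))))) :=
          Finset.sum_congr rfl expand
      _ = (∑ k ∈ range (n+1), (C a n k * (u^(n-k) * (u^k)⁻¹)) • (E2^(n-k) * (Y^k * E1^(a+1-k))))
          + ∑ k ∈ range (n+1), (C a n k * qint (n-k)) • (E2^(n-(k+1)) * (Y^(k+1) * E1^(a+1-(k+1)))) :=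
          Finset.sum_add_distrib
      _ = ∑ k ∈ range (n+1), C (a+1) n k • (E2^(n-k) * (Y^k * E1^(a+1-k))) := by
          rw [Finset.sum_range_succ
            (f := fun k => (C a n k * qint (n-k)) • (E2^(n-(k+1)) * (Y^(k+1) * E1^(a+1-(k+1)))))]
          rw [Nat.sub_self, qint_zero, mul_zero, zero_smul, add_zero]
          rw [Finset.sum_range_succ'
            (f := fun k => (C a n k * (u^(n-k) * (u^k)⁻¹)) • (E2^(n-k) * (Y^k * E1^(a+1-k))))]
          rw [Finset.sum_range_succ'
            (f := fun k => C (a+1) n k • (E2^(n-k) * (Y^k * E1^(a+1-k))))]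
          rw [add_right_comm, ← Finset.sum_add_distrib]
          congr 1
          · refine Finset.sum_congr rfl fun k hk => ?_
            rw [Finset.mem_range] at hk
            rw [C_coeff a n k (by omega), add_smul]
          · rw [← C_coeff0 a n]

include hY hYE1 hE2Y in
lemma main_side (m n : ℕ) (hn : 0 < n) (hm : n < m) (e : ℤ) (he : e = 1 ∨ e = -1) :
    ∑ r ∈ range (m+1), ((-1:Qq)^r * u ^ (e * ((m:ℤ)-(n:ℤ)-1) * (r:ℤ)))
      • (dp E1 (m-r) * dp E2 n * dp E1 r) = 0 := by
  have hstep : ∀ r ∈ range (m+1),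
      ((-1:Qq)^r * u ^ (e * ((m:ℤ)-(n:ℤ)-1) * (r:ℤ))) • (dp E1 (m-r) * dp E2 n * dp E1 r)
      = ∑ k ∈ range (n+1),
          ((-1:Qq)^r * u ^ (e * ((m:ℤ)-(n:ℤ)-1) * (r:ℤ))
            * ((qfact (m-r) * qfact n * qfact r)⁻¹ * C (m-r) n k))
            • (E2^(n-k) * (Y^k * E1^(m-k))) := by
    intro r hr
    rw [Finset.mem_range] at hr
    have hdp : dp E1 (m-r) * dp E2 n * dp E1 r
        = ((qfact (m-r))⁻¹ * ((qfact n)⁻¹ * (qfact r)⁻¹)) • (E1^(m-r) * E2^n * E1^r) := by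
      simp only [dp, smul_mul_assoc, mul_smul_comm, smul_smul]
      congr 1
      ring
    have hL2r : E1^(m-r) * E2^n * E1^r
        = ∑ k ∈ range (n+1), C (m-r) n k • (E2^(n-k) * (Y^k * E1^(m-k))) := by
      rw [L2 E1 E2 Y hY hYE1 hE2Y n (m-r), Finset.sum_mul]
      refine Finset.sum_congr rfl fun k hk => ?_
      rw [Finset.mem_range] at hk
      by_cases hkmr : k ≤ m - r
      · rw [smul_mul_assoc, mul_assoc, mul_assoc, ← pow_add,
          show m - r - k + r = m - k by omega]
      · rw [C_gt n (by omega), zero_smul, zero_smul, zero_mul]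
    rw [hdp, hL2r, smul_smul, Finset.smul_sum]
    refine Finset.sum_congr rfl fun k hk => ?_
    rw [smul_smul]
    congr 1
    simp only [mul_inv]
    ring
  rw [Finset.sum_congr rfl hstep, Finset.sum_comm]
  refine Finset.sum_eq_zero fun k hk => ?_
  rw [Finset.mem_range] at hk
  rw [← Finset.sum_smul, key_scalar m n k e (by omega) hm he, zero_smul]

end Alg

section Mk

variable {A : Type*} [Ring A] [Algebra Qq A] (E1 E2 : A)

lemma mk_hYE1 (hs1 : E1^2*E2 + E2*E1^2 = qint 2 • (E1*E2*E1)) :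
    (E1*E2 - u • (E2*E1)) * E1 = u • (E1 * (E1*E2 - u • (E2*E1))) := by
  rw [qint_two] at hs1
  rw [sub_mul, mul_sub, smul_sub, smul_mul_assoc, mul_smul_comm, smul_smul]
  have a1 : E2*E1*E1 = E2*E1^2 := by rw [mul_assoc, ← sq]
  have a2 : E1*(E1*E2) = E1^2*E2 := by rw [← mul_assoc, ← sq]
  have a3 : E1*(E2*E1) = E1*E2*E1 := by rw [mul_assoc]
  rw [a1, a2, a3]
  have h3 : E1^2*E2 = (u + u⁻¹) • (E1*E2*E1) - E2*E1^2 := by rw [← hs1]; abel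
  rw [h3, smul_sub, smul_smul,
    show u * (u + u⁻¹) = u*u + 1 by rw [mul_add, mul_inv_cancel₀ u_ne],
    add_smul, one_smul]
  abel

lemma mk_hE2Y (hs2 : E2^2*E1 + E1*E2^2 = qint 2 • (E2*E1*E2)) :
    E2 * (E1*E2 - u • (E2*E1)) = u • ((E1*E2 - u • (E2*E1)) * E2) := by
  rw [qint_two] at hs2
  rw [mul_sub, sub_mul, smul_sub, smul_mul_assoc, mul_smul_comm, smul_smul]
  have a1 : E2*(E1*E2) = E2*E1*E2 := by rw [mul_assoc]
  have a2 : E2*(E2*E1) = E2^2*E1 := by rw [← mul_assoc, ← sq]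
  have a3 : E1*E2*E2 = E1*E2^2 := by rw [mul_assoc, ← sq]
  rw [a1, a2, a3]
  have h3 : E1*E2^2 = (u + u⁻¹) • (E2*E1*E2) - E2^2*E1 := by rw [← hs2]; abel
  rw [h3, smul_sub, smul_smul,
    show u * (u + u⁻¹) = u*u + 1 by rw [mul_add, mul_inv_cancel₀ u_ne],
    add_smul, one_smul]
  abel

end Mk

end HS

/-- higher quantum Serre relations: for m > n > 0 and ε ∈ {1,-1},
∑_{r=0}^{m} (−1)^r q^{ε(m−n−1)r} E1^{(m−r)} E2^{(n)} E1^{(r)} = 0,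
and the same with E1 and E2 interchanged. -/
theorem stmt_2 (A : Type*) [Ring A] [Algebra Qq A] (E1 E2 : A)
    (hs1 : E1 ^ 2 * E2 + E2 * E1 ^ 2 = qint 2 • (E1 * E2 * E1))
    (hs2 : E2 ^ 2 * E1 + E1 * E2 ^ 2 = qint 2 • (E2 * E1 * E2))
    (m n : ℕ) (hn : 0 < n) (hm : n < m) (ε : ℤ) (hε : ε = 1 ∨ ε = -1) :
    (∑ r ∈ Finset.range (m + 1),
        ((-1 : Qq) ^ r * (RatFunc.X : Qq) ^ (ε * ((m : ℤ) - (n : ℤ) - 1) * (r : ℤ))) •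
          (dp E1 (m - r) * dp E2 n * dp E1 r) = 0) ∧
    (∑ r ∈ Finset.range (m + 1),
        ((-1 : Qq) ^ r * (RatFunc.X : Qq) ^ (ε * ((m : ℤ) - (n : ℤ) - 1) * (r : ℤ))) •
          (dp E2 (m - r) * dp E1 n * dp E2 r) = 0) := by
  constructor
  · exact HS.main_side E1 E2 (E1*E2 - HS.u • (E2*E1)) (by abel) (HS.mk_hYE1 E1 E2 hs1)
      (HS.mk_hE2Y E1 E2 hs2) m n hn hm ε hε
  · exact HS.main_side E2 E1 (E2*E1 - HS.u • (E1*E2)) (by abel) (HS.mk_hYE1 E2 E1 hs2)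
      (HS.mk_hE2Y E2 E1 hs1) m n hn hm ε hε
end
end
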